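/- arXiv:2508.07008 — 4 statements merged into one kernel-verified Lean document; each statement's English description precedes it below -/
import Mathlib

section
/- Let x ∈ ℝ^m, let ε > 0, let x̃ ∈ ℝ^ℓ be a minimum-error ℓ-simplification of x with Δ = d_dF(x,x̃), and let x' be obtained from x by rounding each entry up to the next multiple of εΔ. Then for every y ∈ ℝ^ℓ, (1−ε)·d_dF(x,y) ≤ d_dF(x',y) ≤ (1+ε)·d_dF(x,y). -/
open scoped Classical

/-- A single step of a traversal: increment first, second, or both coordinates by 1. -/
def IsStep (p q : ℕ × ℕ) : Prop :=
  (q.1 = p.1 + 1 ∧ q.2 = p.2) ∨ (q.1 = p.1 ∧ q.2 = p.2 + 1) ∨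
    (q.1 = p.1 + 1 ∧ q.2 = p.2 + 1)

/-- A traversal of `[m] × [ℓ]`: a sequence of index pairs starting at `(1,1)`,
ending at `(m,ℓ)`, where consecutive pairs differ by a valid step. -/
def IsTraversal (m ℓ : ℕ) (T : List (ℕ × ℕ)) : Prop :=
  T.head? = some (1, 1) ∧ T.getLast? = some (m, ℓ) ∧ T.Chain' IsStep

/-- The cost of a traversal: the maximum of `|x i - y j|` over pairs `(i,j)` in `T`. -/
noncomputable def travCost (x y : ℕ → ℝ) (T : List (ℕ × ℕ)) : ℝ :=
  (T.map (fun p => |x p.1 - y p.2|)).foldr max 0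

/-- The discrete Fréchet distance between time series `x ∈ ℝ^m` and `y ∈ ℝ^ℓ`
(indexed by `1,…,m` and `1,…,ℓ` respectively). -/
noncomputable def dF (m ℓ : ℕ) (x y : ℕ → ℝ) : ℝ :=
  sInf {c | ∃ T, IsTraversal m ℓ T ∧ travCost x y T = c}

lemma isStep_fst_le {p q : ℕ × ℕ} (h : IsStep p q) : p.1 ≤ q.1 := by
  rcases h with ⟨h1, _⟩ | ⟨h1, _⟩ | ⟨h1, _⟩ <;> omega

lemma chain'_head_fst_le (T : List (ℕ × ℕ)) (hc : T.Chain' IsStep)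
    (a : ℕ × ℕ) (ha : T.head? = some a) : ∀ p ∈ T, a.1 ≤ p.1 := by
  induction T generalizing a with
  | nil => simp at ha
  | cons b T ih =>
    simp only [List.head?_cons, Option.some.injEq] at ha
    subst ha
    intro p hp
    rcases List.mem_cons.1 hp with rfl | hp
    · exact le_refl _
    · cases T with
      | nil => simp at hp
      | cons c T' =>
        have hstep : IsStep b c := (List.isChain_cons_cons.1 hc).1
        exact le_trans (isStep_fst_le hstep)
          (ih (List.isChain_cons_cons.1 hc).2 c rfl p hp)

lemma chain'_fst_le_getLast (T : List (ℕ × ℕ)) (hc : T.Chain' IsStep)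
    (q : ℕ × ℕ) (hq : T.getLast? = some q) : ∀ p ∈ T, p.1 ≤ q.1 := by
  induction T with
  | nil => simp at hq
  | cons b T ih =>
    intro p hp
    cases T with
    | nil =>
      simp only [List.getLast?_singleton, Option.some.injEq] at hq
      simp only [List.mem_singleton] at hp
      subst hq; subst hp; exact le_refl _
    | cons c T' =>
      have hstep : IsStep b c := (List.isChain_cons_cons.1 hc).1
      have hc' := (List.isChain_cons_cons.1 hc).2
      have hq' : (c :: T').getLast? = some q := by
        rwa [List.getLast?_cons_cons] at hq
      rcases List.mem_cons.1 hp with rfl | hp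
      · exact le_trans (isStep_fst_le hstep)
          (ih hc' hq' c (List.mem_cons_self))
      · exact ih hc' hq' p hp

lemma foldr_max_nonneg (l : List ℝ) : 0 ≤ l.foldr max 0 := by
  induction l with
  | nil => exact le_refl _
  | cons a l ih => exact le_trans ih (le_max_right _ _)

lemma travCost_nonneg (x y : ℕ → ℝ) (T : List (ℕ × ℕ)) : 0 ≤ travCost x y T :=
  foldr_max_nonneg _

lemma travCost_le_aux (f g : ℕ × ℕ → ℝ) (c : ℝ) (hc : 0 ≤ c) (T : List (ℕ × ℕ))
    (h : ∀ p ∈ T, f p ≤ g p + c) :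
    (T.map f).foldr max 0 ≤ (T.map g).foldr max 0 + c := by
  induction T with
  | nil => simpa
  | cons a T ih =>
    simp only [List.map_cons, List.foldr_cons]
    refine max_le ?_ ?_
    · exact le_trans (h a (List.mem_cons_self))
        (by have := le_max_left (g a) ((T.map g).foldr max 0); linarith)
    · exact le_trans (ih (fun p hp => h p (List.mem_cons_of_mem _ hp)))
        (by have := le_max_right (g a) ((T.map g).foldr max 0); linarith)

lemma exists_path (m ℓ : ℕ) :
    ∀ n a b, 1 ≤ a → 1 ≤ b → a ≤ m → b ≤ ℓ → (m - a) + (ℓ - b) ≤ n →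
    ∃ T : List (ℕ × ℕ), T.head? = some (a, b) ∧ T.getLast? = some (m, ℓ) ∧
      T.Chain' IsStep := by
  intro n
  induction n with
  | zero =>
    intro a b h1 h2 h3 h4 h5
    have ha : a = m := by omega
    have hb : b = ℓ := by omega
    subst ha; subst hb
    exact ⟨[(a, b)], by simp, by simp, List.isChain_singleton _⟩
  | succ n ih =>
    intro a b h1 h2 h3 h4 h5
    by_cases ham : a < m
    · obtain ⟨T, hT1, hT2, hT3⟩ := ih (a + 1) b (by omega) h2 (by omega) h4 (by omega)
      refine ⟨(a, b) :: T, by simp, ?_, ?_⟩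
      · cases T with
        | nil => simp at hT1
        | cons c T' => rwa [List.getLast?_cons_cons]
      · refine List.isChain_cons.2 ⟨?_, hT3⟩
        intro h hh
        rw [hT1] at hh
        simp only [Option.mem_some_iff] at hh
        subst hh
        left; exact ⟨rfl, rfl⟩
    · by_cases hbl : b < ℓ
      · obtain ⟨T, hT1, hT2, hT3⟩ := ih a (b + 1) h1 (by omega) h3 (by omega) (by omega)
        refine ⟨(a, b) :: T, by simp, ?_, ?_⟩
        · cases T with
          | nil => simp at hT1
          | cons c T' => rwa [List.getLast?_cons_cons]
        · refine List.isChain_cons.2 ⟨?_, hT3⟩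
          intro h hh
          rw [hT1] at hh
          simp only [Option.mem_some_iff] at hh
          subst hh
          right; left; exact ⟨rfl, rfl⟩
      · have ha : a = m := by omega
        have hb : b = ℓ := by omega
        subst ha; subst hb
        exact ⟨[(a, b)], by simp, by simp, List.isChain_singleton _⟩

lemma costSet_nonempty (m ℓ : ℕ) (hm : 1 ≤ m) (hl : 1 ≤ ℓ) (x y : ℕ → ℝ) :
    {c | ∃ T, IsTraversal m ℓ T ∧ travCost x y T = c}.Nonempty := by
  obtain ⟨T, h1, h2, h3⟩ := exists_path m ℓ ((m - 1) + (ℓ - 1)) 1 1 le_rfl le_rfl hm hl le_rfl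
  exact ⟨travCost x y T, T, ⟨h1, h2, h3⟩, rfl⟩

lemma costSet_bddBelow (m ℓ : ℕ) (x y : ℕ → ℝ) :
    BddBelow {c | ∃ T, IsTraversal m ℓ T ∧ travCost x y T = c} := by
  refine ⟨0, fun c hc => ?_⟩
  obtain ⟨T, _, rfl⟩ := hc
  exact travCost_nonneg x y T

lemma dF_nonneg (m ℓ : ℕ) (x y : ℕ → ℝ) : 0 ≤ dF m ℓ x y := by
  apply Real.sInf_nonneg
  rintro c ⟨T, _, rfl⟩
  exact travCost_nonneg x y T

lemma dF_le_dF_add (m ℓ : ℕ) (hm : 1 ≤ m) (hl : 1 ≤ ℓ) (x x' y : ℕ → ℝ) (c : ℝ)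
    (hc : 0 ≤ c) (h : ∀ i, 1 ≤ i → i ≤ m → |x' i - x i| ≤ c) :
    dF m ℓ x' y ≤ dF m ℓ x y + c := by
  rw [show dF m ℓ x y + c = (dF m ℓ x' y - c) + c + (dF m ℓ x y - (dF m ℓ x' y - c)) by ring]
  have key : dF m ℓ x' y - c ≤ dF m ℓ x y := by
    apply le_csInf (costSet_nonempty m ℓ hm hl x y)
    rintro s ⟨T, hT, rfl⟩
    have hle : dF m ℓ x' y ≤ travCost x' y T :=
      csInf_le (costSet_bddBelow m ℓ x' y) ⟨T, hT, rfl⟩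
    have hcost : travCost x' y T ≤ travCost x y T + c := by
      apply travCost_le_aux _ _ c hc
      intro p hp
      have h1 : 1 ≤ p.1 := chain'_head_fst_le T hT.2.2 (1, 1) hT.1 p hp
      have h2 : p.1 ≤ m := chain'_fst_le_getLast T hT.2.2 (m, ℓ) hT.2.1 p hp
      have := h p.1 h1 h2
      have habs : |x' p.1 - y p.2| ≤ |x p.1 - y p.2| + |x' p.1 - x p.1| := by
        have := abs_sub_abs_le_abs_sub (x' p.1 - y p.2) (x p.1 - y p.2)
        have h3 : |x' p.1 - y p.2 - (x p.1 - y p.2)| = |x' p.1 - x p.1| := by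
          ring_nf
        calc |x' p.1 - y p.2| ≤ |x p.1 - y p.2| + |x' p.1 - y p.2 - (x p.1 - y p.2)| := by
              have := abs_sub (x' p.1 - y p.2) (x p.1 - y p.2); linarith [abs_sub_abs_le_abs_sub (x' p.1 - y p.2) (x p.1 - y p.2)]
          _ = |x p.1 - y p.2| + |x' p.1 - x p.1| := by rw [h3]
      linarith
    linarith
  linarith

/-- Rounding the entries of `x` up to the next multiple of εΔ, where Δ is the
minimum-error ℓ-simplification error, preserves distances to complexity-ℓ series
up to a factor (1 ± ε). -/
theorem stmt5 (m ℓ : ℕ) (hm : 1 ≤ m) (hl : 1 ≤ ℓ) (ε : ℝ) (hε : 0 < ε)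
    (x xt x' : ℕ → ℝ)
    (hxt : ∀ y : ℕ → ℝ, dF m ℓ x xt ≤ dF m ℓ x y)
    (hx' : ∀ i, 1 ≤ i → i ≤ m →
      x' i = if dF m ℓ x xt = 0 then x i
        else ε * dF m ℓ x xt * ((⌈x i / (ε * dF m ℓ x xt)⌉ : ℤ) : ℝ)) :
    ∀ y : ℕ → ℝ,
      (1 - ε) * dF m ℓ x y ≤ dF m ℓ x' y ∧
      dF m ℓ x' y ≤ (1 + ε) * dF m ℓ x y := by
  intro y
  have hΔ0 : 0 ≤ dF m ℓ x xt := dF_nonneg m ℓ x xt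
  have hpt : ∀ i, 1 ≤ i → i ≤ m → |x' i - x i| ≤ ε * dF m ℓ x xt := by
    intro i hi1 hi2
    rw [hx' i hi1 hi2]
    by_cases hz : dF m ℓ x xt = 0
    · simp [hz]
    · rw [if_neg hz]
      have hc : 0 < ε * dF m ℓ x xt :=
        mul_pos hε (lt_of_le_of_ne hΔ0 (Ne.symm hz))
      set c := ε * dF m ℓ x xt with hcdef
      have h1 : (x i / c) ≤ (⌈x i / c⌉ : ℝ) := Int.le_ceil _
      have h2 : ((⌈x i / c⌉ : ℤ) : ℝ) < x i / c + 1 := Int.ceil_lt_add_one _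
      have hxc : c * (x i / c) = x i := by field_simp
      rw [abs_le]
      constructor
      · have := mul_le_mul_of_nonneg_left h1 hc.le
        rw [hxc] at this
        linarith
      · have := mul_lt_mul_of_pos_left h2 hc
        rw [mul_add, mul_one, hxc] at this
        linarith
  have hεΔ : 0 ≤ ε * dF m ℓ x xt := mul_nonneg hε.le hΔ0
  have hΔle : dF m ℓ x xt ≤ dF m ℓ x y := hxt y
  have h1 : dF m ℓ x' y ≤ dF m ℓ x y + ε * dF m ℓ x xt :=
    dF_le_dF_add m ℓ hm hl x x' y _ hεΔ hpt
  have h2 : dF m ℓ x y ≤ dF m ℓ x' y + ε * dF m ℓ x xt := by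
    apply dF_le_dF_add m ℓ hm hl x' x y _ hεΔ
    intro i hi1 hi2
    rw [abs_sub_comm]; exact hpt i hi1 hi2
  have hεle : ε * dF m ℓ x xt ≤ ε * dF m ℓ x y :=
    mul_le_mul_of_nonneg_left hΔle hε.le
  constructor <;> nlinarith
end

section
/- Let x ∈ ℝ^m, ℓ ∈ ℕ, ε ∈ (0,1], let x̃ be a minimum-error ℓ-simplification of x with Δ = d_dF(x,x̃) > 0, and define x' by rounding each entry of x up to the next multiple of εΔ. Then the number of distinct values of x' is O(ℓ/ε); concretely, every entry x_i lies in some interval [x̃_j − Δ, x̃_j + Δ], so x' has at most ℓ·(⌈2/ε⌉ + 2) distinct values. -/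
open scoped Classical

lemma foldr_max_ge {l : List ℝ} {a : ℝ} (ha : a ∈ l) : a ≤ l.foldr max 0 := by
  induction l with
  | nil => simp at ha
  | cons b t ih =>
    rcases List.mem_cons.1 ha with h | h
    · simp [h]
    · exact le_trans (ih h) (le_max_right _ _)

/-- explicit traversal -/
def trav (m ℓ : ℕ) : List (ℕ × ℕ) :=
  (List.range (m + ℓ - 1)).map (fun i => if i < m then (i + 1, 1) else (m, i - m + 2))

lemma trav_isTraversal (m ℓ : ℕ) (hm : 1 ≤ m) (hl : 1 ≤ ℓ) :
    IsTraversal m ℓ (trav m ℓ) := by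
  set N := m + ℓ - 1 with hN
  have hN1 : 1 ≤ N := by omega
  refine ⟨?_, ?_, ?_⟩
  · obtain ⟨k, hk⟩ : ∃ k, N = k + 1 := ⟨N - 1, by omega⟩
    rw [trav, ← hN, hk, List.range_succ_eq_map]
    simp; omega
  · obtain ⟨k, hk⟩ : ∃ k, N = k + 1 := ⟨N - 1, by omega⟩
    rw [trav, ← hN, hk, List.range_succ, List.map_append]
    simp only [List.map_cons, List.map_nil, List.getLast?_concat]
    by_cases h : k < m
    · have : m = k + 1 := by omega
      have : ℓ = 1 := by omega
      simp [h]; omega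
    · simp [h]; omega
  · rw [List.Chain', List.isChain_iff_getElem]
    intro i hi
    simp only [trav, ← hN, List.length_map, List.length_range] at hi
    have hg : ∀ j (hj : j < N), (trav m ℓ)[j]'(by simp [trav, ← hN]; omega) =
        if j < m then (j + 1, 1) else (m, j - m + 2) := by
      intro j hj
      simp [trav, ← hN]
    rw [hg i (by omega), hg (i + 1) (by omega)]
    by_cases h1 : i + 1 < m
    · simp [h1, (by omega : i < m), IsStep]
    · by_cases h2 : i < m
      · simp [h1, h2, IsStep]; omega
      · simp [h1, h2, IsStep]; omega

lemma step_mono {p q : ℕ × ℕ} (h : IsStep p q) : p.1 ≤ q.1 ∧ p.2 ≤ q.2 := by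
  rcases h with ⟨h1, h2⟩ | ⟨h1, h2⟩ | ⟨h1, h2⟩ <;> omega

/-- every element of a chain is bounded by head and last -/
lemma mem_bounds : ∀ (T : List (ℕ × ℕ)) (h g : ℕ × ℕ), T.Chain' IsStep →
    T.head? = some h → T.getLast? = some g → ∀ p ∈ T,
    h.1 ≤ p.1 ∧ h.2 ≤ p.2 ∧ p.1 ≤ g.1 ∧ p.2 ≤ g.2 := by
  intro T
  induction T with
  | nil => intro h g _ hh; simp at hh
  | cons a rest ih =>
    intro h g hc hh hg p hp
    simp only [List.head?_cons, Option.some.injEq] at hh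
    subst hh
    match rest, hc, hg with
    | [], _, hg =>
      simp at hg hp
      subst hg; subst hp; omega
    | b :: t, hc, hg =>
      rw [List.Chain', List.isChain_cons_cons] at hc
      have hab := step_mono hc.1
      rw [List.getLast?_cons_cons] at hg
      have hrest := ih b g hc.2 rfl hg
      have hbg := hrest b (List.mem_cons_self)
      rcases List.mem_cons.1 hp with h | h
      · subst h; omega
      · have := hrest p h; omega

/-- intermediate value property for first coordinates -/
lemma exists_fst_eq : ∀ (T : List (ℕ × ℕ)) (h g : ℕ × ℕ), T.Chain' IsStep →
    T.head? = some h → T.getLast? = some g → ∀ i, h.1 ≤ i → i ≤ g.1 →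
    ∃ p ∈ T, p.1 = i := by
  intro T
  induction T with
  | nil => intro h g _ hh; simp at hh
  | cons a rest ih =>
    intro h g hc hh hg i hi1 hi2
    simp only [List.head?_cons, Option.some.injEq] at hh
    subst hh
    match rest, hc, hg with
    | [], _, hg =>
      simp at hg; subst hg
      exact ⟨a, by simp, by omega⟩
    | b :: t, hc, hg =>
      rw [List.Chain', List.isChain_cons_cons] at hc
      rw [List.getLast?_cons_cons] at hg
      by_cases h : a.1 = i
      · exact ⟨a, List.mem_cons_self, h⟩
      · have hab : b.1 ≤ a.1 + 1 := by have := step_mono hc.1; rcases hc.1 with ⟨h1,_⟩|⟨h1,_⟩|⟨h1,_⟩ <;> omega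
        obtain ⟨p, hp, hpi⟩ := ih b g hc.2 rfl hg i (by omega) hi2
        exact ⟨p, List.mem_cons_of_mem _ hp, hpi⟩

lemma part1 (m ℓ : ℕ) (hm : 1 ≤ m) (hl : 1 ≤ ℓ) (x xt : ℕ → ℝ)
    (i : ℕ) (h1 : 1 ≤ i) (h2 : i ≤ m) :
    ∃ j, 1 ≤ j ∧ j ≤ ℓ ∧ |x i - xt j| ≤ dF m ℓ x xt := by
  by_contra hcon
  push_neg at hcon
  have hne : (Finset.Icc 1 ℓ).Nonempty := ⟨1, by simp [hl]⟩
  set c₀ := (Finset.Icc 1 ℓ).inf' hne (fun j => |x i - xt j|) with hc₀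
  have hlt : dF m ℓ x xt < c₀ := by
    rw [hc₀, Finset.lt_inf'_iff]
    intro j hj
    rw [Finset.mem_Icc] at hj
    exact hcon j hj.1 hj.2
  have hSne : {c | ∃ T, IsTraversal m ℓ T ∧ travCost x xt T = c}.Nonempty :=
    ⟨travCost x xt (trav m ℓ), trav m ℓ, trav_isTraversal m ℓ hm hl, rfl⟩
  have hlb : c₀ ≤ dF m ℓ x xt := by
    apply le_csInf hSne
    rintro c ⟨T, ⟨hh, hg, hc⟩, rfl⟩
    obtain ⟨p, hpT, hpi⟩ := exists_fst_eq T (1,1) (m,ℓ) hc hh hg i h1 h2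
    have hb := mem_bounds T (1,1) (m,ℓ) hc hh hg p hpT
    have h1 : c₀ ≤ |x i - xt p.2| :=
      Finset.inf'_le _ (Finset.mem_Icc.2 ⟨hb.2.1, hb.2.2.2⟩)
    have h2 : |x p.1 - xt p.2| ≤ travCost x xt T :=
      foldr_max_ge (List.mem_map_of_mem hpT)
    rw [hpi] at h2
    exact le_trans h1 h2
  exact absurd hlb (not_le.2 hlt)
/-- After rounding up to multiples of εΔ, each entry of `x` lies within Δ of some
entry of the simplification, and the rounded series has at most ℓ(⌈2/ε⌉+2)
distinct values. -/
theorem stmt6 (m ℓ : ℕ) (hm : 1 ≤ m) (hl : 1 ≤ ℓ) (ε : ℝ) (hε1 : 0 < ε) (hε2 : ε ≤ 1)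
    (x xt x' : ℕ → ℝ)
    (hxt : ∀ y : ℕ → ℝ, dF m ℓ x xt ≤ dF m ℓ x y)
    (hΔ : 0 < dF m ℓ x xt)
    (hx' : ∀ i, 1 ≤ i → i ≤ m →
      x' i = ε * dF m ℓ x xt * ((⌈x i / (ε * dF m ℓ x xt)⌉ : ℤ) : ℝ)) :
    (∀ i, 1 ≤ i → i ≤ m → ∃ j, 1 ≤ j ∧ j ≤ ℓ ∧ |x i - xt j| ≤ dF m ℓ x xt) ∧
    ((Finset.Icc 1 m).image x').card ≤ ℓ * (⌈(2 : ℝ) / ε⌉₊ + 2) := by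
  set Δ := dF m ℓ x xt with hΔdef
  set e := ε * Δ with he
  have hepos : 0 < e := mul_pos hε1 hΔ
  have hp1 : ∀ i, 1 ≤ i → i ≤ m → ∃ j, 1 ≤ j ∧ j ≤ ℓ ∧ |x i - xt j| ≤ Δ :=
    fun i h1 h2 => part1 m ℓ hm hl x xt i h1 h2
  refine ⟨hp1, ?_⟩
  set T : Finset ℝ := (Finset.Icc 1 ℓ).biUnion (fun j =>
    (Finset.Icc ⌈(xt j - Δ) / e⌉ ⌈(xt j + Δ) / e⌉).image (fun k : ℤ => e * k)) with hT
  have hsub : (Finset.Icc 1 m).image x' ⊆ T := by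
    intro v hv
    rw [Finset.mem_image] at hv
    obtain ⟨i, hi, rfl⟩ := hv
    rw [Finset.mem_Icc] at hi
    obtain ⟨j, hj1, hj2, hj3⟩ := hp1 i hi.1 hi.2
    rw [hT, Finset.mem_biUnion]
    refine ⟨j, Finset.mem_Icc.2 ⟨hj1, hj2⟩, ?_⟩
    rw [Finset.mem_image]
    refine ⟨⌈x i / e⌉, ?_, (hx' i hi.1 hi.2).symm⟩
    rw [Finset.mem_Icc]
    rw [abs_sub_le_iff] at hj3
    constructor
    · exact Int.ceil_le_ceil (by gcongr; linarith)
    · exact Int.ceil_le_ceil (by gcongr; linarith)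
  calc ((Finset.Icc 1 m).image x').card ≤ T.card := Finset.card_le_card hsub
    _ ≤ ∑ j ∈ Finset.Icc 1 ℓ,
        ((Finset.Icc ⌈(xt j - Δ) / e⌉ ⌈(xt j + Δ) / e⌉).image (fun k : ℤ => e * k)).card :=
        Finset.card_biUnion_le
    _ ≤ ∑ j ∈ Finset.Icc 1 ℓ, (⌈(2 : ℝ) / ε⌉₊ + 2) := by
        apply Finset.sum_le_sum
        intro j _
        refine le_trans (Finset.card_image_le) ?_
        rw [Int.card_Icc]
        have key : ⌈(xt j + Δ) / e⌉ ≤ ⌈(2 : ℝ) / ε⌉ + ⌈(xt j - Δ) / e⌉ := by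
          have h2e : (xt j + Δ) / e = 2 / ε + (xt j - Δ) / e := by
            rw [he]; field_simp; ring
          rw [h2e]
          exact le_trans (Int.ceil_add_le _ _) (by rfl)
        have hnn : 0 ≤ ⌈(2 : ℝ) / ε⌉ := Int.ceil_nonneg (by positivity)
        have htn : ⌈(2 : ℝ) / ε⌉.toNat = ⌈(2 : ℝ) / ε⌉₊ := Int.ceil_toNat _
        omega
    _ = ℓ * (⌈(2 : ℝ) / ε⌉₊ + 2) := by
        rw [Finset.sum_const, Nat.card_Icc, smul_eq_mul]
        congr 1
end

section
/- For every r, ℓ ∈ ℕ there exists a constant f(r,ℓ) ∈ ℕ such that: for every m ∈ ℕ and every time series x ∈ ℝ^m with at most r distinct values, there exists a time series y of complexity at most f(r,ℓ) with set(y) = set(x) such that d_dF(x,q) = d_dF(y,q) for every q ∈ ℝ^ℓ. -/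
open scoped Classical

/-! ### Auxiliary development -/

/-- Componentwise order on index pairs. -/
def RLE : ℕ × ℕ → ℕ × ℕ → Prop := fun p q => p.1 ≤ q.1 ∧ p.2 ≤ q.2

instance : IsTrans (ℕ × ℕ) RLE :=
  ⟨fun _ _ _ h1 h2 => ⟨h1.1.trans h2.1, h1.2.trans h2.2⟩⟩

lemma isStep_rle {p q : ℕ × ℕ} (h : IsStep p q) : RLE p q := by
  rcases h with ⟨h1, h2⟩ | ⟨h1, h2⟩ | ⟨h1, h2⟩ <;> exact ⟨by omega, by omega⟩

lemma traversal_mem_bounds {m ℓ : ℕ} {T : List (ℕ × ℕ)} (h : IsTraversal m ℓ T) :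
    ∀ p ∈ T, 1 ≤ p.1 ∧ p.1 ≤ m ∧ 1 ≤ p.2 ∧ p.2 ≤ ℓ := by
  obtain ⟨h1, h2, h3⟩ := h
  have hne : T ≠ [] := fun h => by simp [h] at h1
  have hpw : T.Pairwise RLE :=
    List.isChain_iff_pairwise.mp (List.IsChain.imp (fun _ _ h => isStep_rle h) h3)
  have hhd : T.head hne = (1, 1) := by
    rw [List.head?_eq_head hne] at h1; exact Option.some_injective _ h1
  have hlast : T.getLast hne = (m, ℓ) := by
    rw [List.getLast?_eq_getLast hne] at h2; exact Option.some_injective _ h2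
  intro p hp
  have hlb : RLE (1, 1) p := by
    have heq : T.head hne :: T.tail = T := List.cons_head_tail hne
    rw [← heq] at hpw hp
    rw [List.pairwise_cons] at hpw
    rcases List.mem_cons.mp hp with hpe | hpe
    · rw [hpe, hhd]; exact ⟨le_refl _, le_refl _⟩
    · rw [← hhd]; exact hpw.1 p hpe
  have hub : RLE p (m, ℓ) := by
    have heq : T.dropLast ++ [T.getLast hne] = T := List.dropLast_append_getLast hne
    rw [← heq] at hpw hp
    rw [List.pairwise_append] at hpw
    rcases List.mem_append.mp hp with hpe | hpe
    · rw [← hlast]; exact hpw.2.2 p hpe _ (List.mem_singleton.mpr rfl)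
    · rw [List.mem_singleton.mp hpe, hlast]; exact ⟨le_refl _, le_refl _⟩
  exact ⟨hlb.1, hub.1, hlb.2, hub.2⟩

lemma list_toFinset_map {α β : Type*} [DecidableEq α] [DecidableEq β]
    (l : List α) (f : α → β) : (l.map f).toFinset = l.toFinset.image f := by
  induction l with
  | nil => simp
  | cons a l ih => simp [ih]

/-- The signature of a traversal w.r.t. a series `x`: the set of pairs
`(x i, j)` for `(i,j)` in the traversal. -/
noncomputable def sigOf (x : ℕ → ℝ) (T : List (ℕ × ℕ)) : Finset (ℝ × ℕ) :=
  (T.map fun p => (x p.1, p.2)).toFinset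

/-- Cost of a signature against a query `q`. -/
noncomputable def sigCost (q : ℕ → ℝ) (S : Finset (ℝ × ℕ)) : ℝ :=
  S.fold max 0 (fun s => |s.1 - q s.2|)

instance : Std.IdempotentOp (α := ℝ) max := ⟨max_self⟩

lemma travCost_eq_sigCost (x q : ℕ → ℝ) (T : List (ℕ × ℕ)) :
    travCost x q T = sigCost q (sigOf x T) := by
  induction T with
  | nil => simp [travCost, sigCost, sigOf]
  | cons p T ih =>
    have : travCost x q (p :: T) = max |x p.1 - q p.2| (travCost x q T) := rfl
    rw [this, ih]
    simp only [sigCost, sigOf, List.map_cons, List.toFinset_cons, Finset.fold_insert_idem]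

/-- The set of achievable signatures. -/
noncomputable def SigSet (m ℓ : ℕ) (x : ℕ → ℝ) : Set (Finset (ℝ × ℕ)) :=
  {S | ∃ T, IsTraversal m ℓ T ∧ sigOf x T = S}

lemma dF_eq_sigSet (m ℓ : ℕ) (x q : ℕ → ℝ) :
    dF m ℓ x q = sInf (sigCost q '' SigSet m ℓ x) := by
  unfold dF
  congr 1
  ext c
  constructor
  · rintro ⟨T, hT, rfl⟩
    exact ⟨sigOf x T, ⟨T, hT, rfl⟩, (travCost_eq_sigCost x q T).symm⟩
  · rintro ⟨S, ⟨T, hT, rfl⟩, rfl⟩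
    exact ⟨T, hT, travCost_eq_sigCost x q T⟩

noncomputable def idxF (V : Finset ℝ) : ℝ → ℕ := fun v =>
  if h : v ∈ V then (V.equivFin ⟨v, h⟩ : Fin V.card) else V.card

noncomputable def unidxF (V : Finset ℝ) : ℕ → ℝ := fun i =>
  if h : i < V.card then (V.equivFin.symm ⟨i, h⟩ : ℝ) else 0

lemma idx_le (V : Finset ℝ) (v : ℝ) : idxF V v ≤ V.card := by
  unfold idxF
  split
  · exact le_of_lt (Fin.isLt _)
  · exact le_refl _

lemma unidx_idx {V : Finset ℝ} {v : ℝ} (h : v ∈ V) : unidxF V (idxF V v) = v := by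
  simp only [idxF, dif_pos h, unidxF]
  rw [dif_pos (V.equivFin ⟨v, h⟩).isLt]
  simp

lemma image_unidx_idx {V V' : Finset ℝ} (hc : V'.card = V.card) :
    V'.image (fun v => unidxF V (idxF V' v)) = V := by
  apply Finset.Subset.antisymm
  · intro w hw
    rw [Finset.mem_image] at hw
    obtain ⟨v, hv, rfl⟩ := hw
    simp only [idxF, dif_pos hv, unidxF]
    rw [dif_pos (by rw [← hc]; exact (V'.equivFin ⟨v, hv⟩).isLt)]
    exact Finset.coe_mem _
  · intro w hw
    have hlt : ((V.equivFin ⟨w, hw⟩ : Fin V.card) : ℕ) < V'.card := by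
      rw [hc]; exact (V.equivFin ⟨w, hw⟩).isLt
    set v : V' := V'.equivFin.symm ⟨(V.equivFin ⟨w, hw⟩ : Fin V.card), hlt⟩ with hv
    refine Finset.mem_image.mpr ⟨(v : ℝ), Finset.coe_mem _, ?_⟩
    have hidx : idxF V' (v : ℝ) = ((V.equivFin ⟨w, hw⟩ : Fin V.card) : ℕ) := by
      simp only [idxF, dif_pos (Finset.coe_mem v)]
      rw [Subtype.coe_eta, hv, Equiv.apply_symm_apply]
    rw [hidx]
    simp only [unidxF]
    rw [dif_pos (V.equivFin ⟨w, hw⟩).isLt]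
    simp

lemma sig_comp (f : ℝ → ℝ) (x : ℕ → ℝ) (T : List (ℕ × ℕ)) :
    sigOf (f ∘ x) T = (sigOf x T).image (fun s => (f s.1, s.2)) := by
  rw [sigOf, sigOf, ← list_toFinset_map, List.map_map]
  rfl

lemma sigSet_comp (f : ℝ → ℝ) (m ℓ : ℕ) (x : ℕ → ℝ) :
    SigSet m ℓ (f ∘ x) = (fun S => S.image (fun s => (f s.1, s.2))) '' SigSet m ℓ x := by
  ext S
  constructor
  · rintro ⟨T, hT, rfl⟩
    exact ⟨sigOf x T, ⟨T, hT, rfl⟩, (sig_comp f x T).symm⟩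
  · rintro ⟨S₀, ⟨T, hT, rfl⟩, rfl⟩
    exact ⟨T, hT, sig_comp f x T⟩

noncomputable def codeS (V : Finset ℝ) (S : Finset (ℝ × ℕ)) : Finset (ℕ × ℕ) :=
  S.image (fun s => (idxF V s.1, s.2))

noncomputable def decodeS (V : Finset ℝ) (C : Finset (ℕ × ℕ)) : Finset (ℝ × ℕ) :=
  C.image (fun t => (unidxF V t.1, t.2))

lemma decode_code {V : Finset ℝ} {S : Finset (ℝ × ℕ)} (h : ∀ s ∈ S, s.1 ∈ V) :
    decodeS V (codeS V S) = S := by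
  rw [decodeS, codeS, Finset.image_image]
  have hcongr : ∀ s ∈ S, (fun s : ℝ × ℕ => (unidxF V (idxF V s.1), s.2)) s = id s := by
    intro s hs
    simp [unidx_idx (h s hs)]
  calc S.image ((fun t : ℕ × ℕ => (unidxF V t.1, t.2)) ∘ fun s : ℝ × ℕ => (idxF V s.1, s.2))
      = S.image id := Finset.image_congr hcongr
    _ = S := Finset.image_id

lemma sigSet_val_mem {m ℓ : ℕ} {x : ℕ → ℝ} {S : Finset (ℝ × ℕ)} (hS : S ∈ SigSet m ℓ x) :
    ∀ s ∈ S, s.1 ∈ (Finset.Icc 1 m).image x ∧ s.2 ∈ Finset.Icc 1 ℓ := by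
  obtain ⟨T, hT, rfl⟩ := hS
  intro s hs
  rw [sigOf, List.mem_toFinset, List.mem_map] at hs
  obtain ⟨p, hp, rfl⟩ := hs
  obtain ⟨a, b, c, d⟩ := traversal_mem_bounds hT p hp
  exact ⟨Finset.mem_image.mpr ⟨p.1, Finset.mem_Icc.mpr ⟨a, b⟩, rfl⟩, Finset.mem_Icc.mpr ⟨c, d⟩⟩

/-- The finite invariant of a series: cardinality of its value set together with
the rank-coded set of achievable signatures. -/
noncomputable def kappa (ℓ m : ℕ) (x : ℕ → ℝ) : ℕ × Set (Finset (ℕ × ℕ)) :=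
  (((Finset.Icc 1 m).image x).card,
    codeS ((Finset.Icc 1 m).image x) '' SigSet m ℓ x)

lemma kappa_finite (r ℓ : ℕ) :
    {c : ℕ × Set (Finset (ℕ × ℕ)) |
      ∃ n : ℕ, ∃ z : ℕ → ℝ, 1 ≤ n ∧ ((Finset.Icc 1 n).image z).card ≤ r ∧
        kappa ℓ n z = c}.Finite := by
  set B : Finset (ℕ × ℕ) := Finset.range (r + 1) ×ˢ Finset.Icc 1 ℓ with hB
  apply Set.Finite.subset
    ((Set.finite_Iic r).prod (Set.Finite.finite_subsets (B.powerset : Finset _).finite_toSet))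
  rintro c ⟨n, z, hn, hcard, rfl⟩
  constructor
  · exact hcard
  · rintro A ⟨S, hS, rfl⟩
    rw [Finset.mem_coe, Finset.mem_powerset]
    intro t ht
    rw [codeS, Finset.mem_image] at ht
    obtain ⟨s, hs, rfl⟩ := ht
    obtain ⟨hs1, hs2⟩ := sigSet_val_mem hS s hs
    rw [hB, Finset.mem_product]
    refine ⟨Finset.mem_range.mpr ?_, hs2⟩
    exact lt_of_le_of_lt (idx_le _ _) (Nat.lt_succ_of_le hcard)

lemma transfer {m m' ℓ : ℕ} {x x' : ℕ → ℝ}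
    (hκ : kappa ℓ m' x' = kappa ℓ m x) :
    ∃ y : ℕ → ℝ, (Finset.Icc 1 m').image y = (Finset.Icc 1 m).image x ∧
      SigSet m' ℓ y = SigSet m ℓ x := by
  set V := (Finset.Icc 1 m).image x with hV
  set V' := (Finset.Icc 1 m').image x' with hV'
  have hc : V'.card = V.card := congrArg Prod.fst hκ
  have hs : codeS V' '' SigSet m' ℓ x' = codeS V '' SigSet m ℓ x := congrArg Prod.snd hκ
  set φ : ℝ → ℝ := fun v => unidxF V (idxF V' v) with hφ
  refine ⟨φ ∘ x', ?_, ?_⟩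
  · rw [show (Finset.Icc 1 m').image (φ ∘ x') = ((Finset.Icc 1 m').image x').image φ from
      (Finset.image_image).symm]
    exact image_unidx_idx hc
  · rw [sigSet_comp]
    have h2 : (fun S : Finset (ℝ × ℕ) => S.image (fun s => (φ s.1, s.2)))
        = decodeS V ∘ codeS V' := by
      funext S
      rw [Function.comp_apply, decodeS, codeS, Finset.image_image]
      rfl
    rw [h2, Set.image_comp, hs, ← Set.image_comp]
    have h3 : ∀ S ∈ SigSet m ℓ x, (decodeS V ∘ codeS V) S = S := by
      intro S hS
      exact decode_code (fun s hsmem => (sigSet_val_mem hS s hsmem).1)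
    rw [Set.image_congr h3, Set.image_id']

/-- For every r and ℓ there is a uniform complexity bound f(r,ℓ) such that every
series with at most r distinct values can be replaced by one of complexity at
most f(r,ℓ), with the same value set and the same distance to every
complexity-ℓ series. -/
theorem stmt10 (r ℓ : ℕ) (hl : 1 ≤ ℓ) :
    ∃ f : ℕ, ∀ m : ℕ, 1 ≤ m → ∀ x : ℕ → ℝ,
      ((Finset.Icc 1 m).image x).card ≤ r →
      ∃ m' : ℕ, 1 ≤ m' ∧ m' ≤ f ∧ ∃ y : ℕ → ℝ,
        (Finset.Icc 1 m').image y = (Finset.Icc 1 m).image x ∧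
        ∀ q : ℕ → ℝ, dF m ℓ x q = dF m' ℓ y q := by
  classical
  set K := {c : ℕ × Set (Finset (ℕ × ℕ)) |
    ∃ n : ℕ, ∃ z : ℕ → ℝ, 1 ≤ n ∧ ((Finset.Icc 1 n).image z).card ≤ r ∧
      kappa ℓ n z = c} with hK
  have hfin : K.Finite := kappa_finite r ℓ
  have hwit : ∀ c, c ∈ K → ∃ n : ℕ, ∃ z : ℕ → ℝ,
      1 ≤ n ∧ ((Finset.Icc 1 n).image z).card ≤ r ∧ kappa ℓ n z = c := fun c hc => hc
  choose! wn wz hw1 hw2 hw3 using hwit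
  refine ⟨hfin.toFinset.sup wn, ?_⟩
  intro m hm x hx
  have hc : kappa ℓ m x ∈ K := ⟨m, x, hm, hx, rfl⟩
  obtain ⟨y, hy1, hy2⟩ := transfer (hw3 _ hc)
  refine ⟨wn (kappa ℓ m x), hw1 _ hc,
    Finset.le_sup (hfin.mem_toFinset.mpr hc), y, hy1, ?_⟩
  intro q
  rw [dF_eq_sigSet, dF_eq_sigSet, hy2]
end

section
/- For time series of complexity at most m under the discrete Fréchet distance, every ball of radius r can be covered by at most 8^m balls of radius r/2; hence the doubling dimension of this (pseudo)metric space is O(m). -/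
open scoped Classical

lemma le_foldr_max {l : List ℝ} {a : ℝ} (h : a ∈ l) : a ≤ l.foldr max 0 := by
  induction l with
  | nil => simp at h
  | cons b l ih =>
    rcases List.mem_cons.mp h with rfl | h
    · exact le_max_left _ _
    · exact le_trans (ih h) (le_max_right _ _)

lemma foldr_max_le {l : List ℝ} {B : ℝ} (hB : 0 ≤ B) (h : ∀ a ∈ l, a ≤ B) :
    l.foldr max 0 ≤ B := by
  induction l with
  | nil => simpa using hB
  | cons b l ih =>
    exact max_le (h b (by simp)) (ih fun a ha => h a (by simp [ha]))

lemma abs_le_travCost {x y : ℕ → ℝ} {T : List (ℕ × ℕ)} {p : ℕ × ℕ} (h : p ∈ T) :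
    |x p.1 - y p.2| ≤ travCost x y T :=
  le_foldr_max (List.mem_map_of_mem h)

def StepLE : ℕ × ℕ → ℕ × ℕ → Prop := fun p q => p.1 ≤ q.1 ∧ p.2 ≤ q.2

instance : IsTrans (ℕ × ℕ) StepLE :=
  ⟨fun _ _ _ h1 h2 => ⟨le_trans h1.1 h2.1, le_trans h1.2 h2.2⟩⟩

lemma IsStep.stepLE {p q : ℕ × ℕ} (h : IsStep p q) : StepLE p q := by
  rcases h with ⟨h1, h2⟩ | ⟨h1, h2⟩ | ⟨h1, h2⟩ <;> exact ⟨by omega, by omega⟩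

lemma chain_pairwise {T : List (ℕ × ℕ)} (h : T.Chain' IsStep) : T.Pairwise StepLE :=
  List.isChain_iff_pairwise.mp (h.imp fun _ _ hs => hs.stepLE)

lemma rel_head {α : Type*} {R : α → α → Prop} {l : List α} {h : α} (hp : l.Pairwise R)
    (hh : l.head? = some h) {p : α} (hx : p ∈ l) : p = h ∨ R h p := by
  cases l with
  | nil => simp at hh
  | cons a t =>
    simp only [List.head?_cons, Option.some.injEq] at hh
    subst hh
    rcases List.mem_cons.mp hx with rfl | hx
    · exact Or.inl rfl
    · exact Or.inr ((List.pairwise_cons.mp hp).1 p hx)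

lemma rel_last {α : Type*} {R : α → α → Prop} {l : List α} {q : α} (hp : l.Pairwise R)
    (hq : l.getLast? = some q) {p : α} (hx : p ∈ l) : p = q ∨ R p q := by
  have hh : l.reverse.head? = some q := by rw [List.head?_reverse]; exact hq
  have hp' : l.reverse.Pairwise (flip R) := List.pairwise_reverse.mpr hp
  exact rel_head hp' hh (List.mem_reverse.mpr hx)

lemma exists_match : ∀ (T : List (ℕ × ℕ)), T.Chain' IsStep → ∀ h : ℕ × ℕ,
    T.head? = some h → ∀ q ∈ T, ∀ j : ℕ, h.2 ≤ j → j ≤ q.2 →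
      ∃ p ∈ T, p.2 = j ∧ p.1 ≤ q.1 := by
  intro T
  induction T with
  | nil => intro _ h _ q hq; simp at hq
  | cons a t ih =>
    intro hc h hh q hq j hj1 hj2
    simp only [List.head?_cons, Option.some.injEq] at hh
    subst hh
    rcases List.mem_cons.mp hq with rfl | hq
    · exact ⟨q, by simp, by omega, le_refl _⟩
    · by_cases hja : j = a.2
      · refine ⟨a, by simp, hja.symm, ?_⟩
        have hpw := chain_pairwise hc
        exact ((List.pairwise_cons.mp hpw).1 q hq).1
      · cases t with
        | nil => simp at hq
        | cons b t' =>
          have hc' := List.isChain_cons_cons.mp hc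
          have hb2 : b.2 ≤ j := by
            rcases hc'.1 with ⟨_, h2⟩ | ⟨_, h2⟩ | ⟨_, h2⟩ <;> omega
          obtain ⟨p, hp, hpj, hpq⟩ := ih hc'.2 b rfl q hq j hb2 hj2
          exact ⟨p, List.mem_cons_of_mem _ hp, hpj, hpq⟩

/-- counting monotone maps -/
lemma monotone_card_le (m : ℕ) :
    ((Finset.univ : Finset (Fin m → Fin m)).filter Monotone).card ≤ 2 ^ (2 * m) := by
  classical
  have key := Finset.card_le_card_of_injOn
    (s := (Finset.univ : Finset (Fin m → Fin m)).filter Monotone)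
    (t := (Finset.range (2 * m)).powerset)
    (fun f => Finset.image (fun j : Fin m => (j : ℕ) + (f j : ℕ)) Finset.univ)
    ?_ ?_
  · calc ((Finset.univ : Finset (Fin m → Fin m)).filter Monotone).card
        ≤ (Finset.range (2 * m)).powerset.card := key
      _ = 2 ^ (2 * m) := by rw [Finset.card_powerset, Finset.card_range]
  · intro f _
    simp only [Finset.mem_coe, Finset.mem_powerset]
    intro k hk
    simp only [Finset.mem_image, Finset.mem_univ, true_and] at hk
    obtain ⟨j, rfl⟩ := hk
    have h1 := j.2
    have h2 := (f j).2
    simp only [Finset.mem_range]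
    omega
  · intro f hf g hg hfg
    simp only [Finset.coe_filter, Finset.mem_univ, true_and, Set.mem_setOf_eq] at hf hg
    have hFs : StrictMono (fun j : Fin m => (j : ℕ) + (f j : ℕ)) := by
      intro a b hab
      have h1 : (a : ℕ) < b := hab
      have h2 : (f a : ℕ) ≤ f b := hf hab.le
      show (a : ℕ) + (f a : ℕ) < (b : ℕ) + (f b : ℕ)
      omega
    have hGs : StrictMono (fun j : Fin m => (j : ℕ) + (g j : ℕ)) := by
      intro a b hab
      have h1 : (a : ℕ) < b := hab
      have h2 : (g a : ℕ) ≤ g b := hg hab.le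
      show (a : ℕ) + (g a : ℕ) < (b : ℕ) + (g b : ℕ)
      omega
    replace hfg : Finset.image (fun j : Fin m => (j : ℕ) + (f j : ℕ)) Finset.univ =
        Finset.image (fun j : Fin m => (j : ℕ) + (g j : ℕ)) Finset.univ := hfg
    set s := Finset.image (fun j : Fin m => (j : ℕ) + (f j : ℕ)) Finset.univ with hs
    have hcard : s.card = m := by
      rw [hs, Finset.card_image_of_injective _ hFs.injective, Finset.card_univ,
        Fintype.card_fin]
    have hfmem : ∀ j : Fin m, (j : ℕ) + (f j : ℕ) ∈ s := fun j => by
      rw [hs]; exact Finset.mem_image_of_mem _ (Finset.mem_univ j)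
    have hgmem : ∀ j : Fin m, (j : ℕ) + (g j : ℕ) ∈ s := fun j => by
      rw [hfg]; exact Finset.mem_image_of_mem _ (Finset.mem_univ j)
    have e1 := Finset.orderEmbOfFin_unique (f := fun j : Fin m => (j : ℕ) + (f j : ℕ))
      hcard hfmem hFs
    have e2 := Finset.orderEmbOfFin_unique (f := fun j : Fin m => (j : ℕ) + (g j : ℕ))
      hcard hgmem hGs
    funext j
    have : (j : ℕ) + (f j : ℕ) = (j : ℕ) + (g j : ℕ) := by
      rw [congrFun e1 j, congrFun e2 j]
    exact Fin.ext (by omega)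

/-- the diagonal-ish traversal -/
lemma diag_traversal (m a b : ℕ) (hm : 1 ≤ m)
    (ha' : 1 ≤ a) (hb' : 1 ≤ b) (hab : a ≤ m) (hbb : b ≤ m) (hmax : a = m ∨ b = m) :
    IsTraversal a b ((List.range m).map (fun i => (min (i + 1) a, min (i + 1) b))) := by
  obtain ⟨n, rfl⟩ : ∃ n, m = n + 1 := ⟨m - 1, by omega⟩
  refine ⟨?_, ?_, ?_⟩
  · rw [List.range_succ_eq_map, List.map_cons, List.head?_cons]
    simp only [Option.some.injEq, Prod.mk.injEq]
    omega
  · rw [List.range_succ, List.map_append, List.map_singleton, List.getLast?_concat]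
    simp only [Option.some.injEq, Prod.mk.injEq]
    omega
  · show List.IsChain IsStep _
    rw [List.isChain_map, List.isChain_range_succ]
    intro i hi
    dsimp [IsStep]
    omega


/-- Doubling upper bound: every discrete-Fréchet ball of radius r around a
series of complexity m can be covered by at most 8^m balls of radius r/2. -/
theorem stmt15 (m : ℕ) (hm : 1 ≤ m) (r : ℝ) (hr : 0 < r) (x : ℕ → ℝ) :
    ∃ D : Finset (ℕ → ℝ), D.card ≤ 8 ^ m ∧
      ∀ m' : ℕ, 1 ≤ m' → m' ≤ m → ∀ y : ℕ → ℝ,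
        dF m m' x y ≤ r → ∃ c ∈ D, dF m' m y c ≤ r / 2 := by
  classical
  set clamp : ℕ → Fin m := fun k => ⟨min (k - 1) (m - 1), by omega⟩ with hclamp
  set bld : (Fin m → Fin m) × (Fin m → Bool) → (ℕ → ℝ) := fun fs k =>
    x ((fs.1 (clamp k) : ℕ) + 1) + (if fs.2 (clamp k) then r / 2 else -(r / 2)) with hbld
  set E : Finset ((Fin m → Fin m) × (Fin m → Bool)) :=
    (Finset.univ.filter (fun f : Fin m → Fin m => Monotone f)) ×ˢ Finset.univ with hE
  refine ⟨E.image bld, ?_, ?_⟩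
  · calc (E.image bld).card ≤ E.card := Finset.card_image_le
      _ = _ * _ := Finset.card_product _ _
      _ ≤ 2 ^ (2 * m) * 2 ^ m := by
          refine Nat.mul_le_mul (monotone_card_le m) ?_
          rw [Finset.card_univ, Fintype.card_fun, Fintype.card_bool, Fintype.card_fin]
      _ = 8 ^ m := by
          rw [pow_mul, ← mul_pow]; norm_num
  · intro m' hm'1 hm'2 y hy
    by_contra hcon
    push_neg at hcon
    have hEne : E.Nonempty := ⟨⟨fun _ => ⟨0, by omega⟩, fun _ => true⟩, by
      simp only [hE, Finset.mem_product, Finset.mem_filter, Finset.mem_univ, true_and,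
        and_true]
      intro a b _; exact le_refl _⟩
    have hDne : (E.image bld).Nonempty := hEne.image _
    obtain ⟨c0, hc0D, hc0min⟩ :=
      Finset.exists_min_image (E.image bld) (fun c => dF m' m y c) hDne
    set δ := dF m' m y c0 - r / 2 with hδ
    have hδpos : 0 < δ := by have := hcon c0 hc0D; simp only [hδ]; linarith
    set ε := δ / 2 with hε
    have hεpos : 0 < ε := by positivity
    have hS : ∃ T, IsTraversal m m' T ∧ travCost x y T ≤ r + ε := by
      have hne : {c | ∃ T, IsTraversal m m' T ∧ travCost x y T = c}.Nonempty :=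
        ⟨travCost x y _, _, diag_traversal m m m' hm hm hm'1 (le_refl m) hm'2 (Or.inl rfl),
          rfl⟩
      obtain ⟨v, ⟨T, hT, hTv⟩, hvlt⟩ :=
        exists_lt_of_csInf_lt hne (lt_of_le_of_lt hy (show r < r + ε by linarith))
      exact ⟨T, hT, by rw [hTv]; exact hvlt.le⟩
    obtain ⟨T, ⟨hThead, hTlast, hTchain⟩, hTcost⟩ := hS
    have hpw := chain_pairwise hTchain
    set I : ℕ → ℕ := fun j => sInf {a | (a, j) ∈ T} with hI
    have hlastmem : ((m, m') : ℕ × ℕ) ∈ T := List.mem_of_getLast? hTlast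
    have hmem : ∀ j, 1 ≤ j → j ≤ m' → (I j, j) ∈ T := by
      intro j h1 h2
      have hne : {a | (a, j) ∈ T}.Nonempty := by
        obtain ⟨p, hp, hpj, _⟩ :=
          exists_match T hTchain (1, 1) hThead (m, m') hlastmem j h1 h2
        exact ⟨p.1, by rw [Set.mem_setOf_eq, ← hpj]; simpa using hp⟩
      exact Nat.sInf_mem hne
    have hI1 : ∀ j, 1 ≤ j → j ≤ m' → 1 ≤ I j := by
      intro j h1 h2
      rcases rel_head hpw hThead (hmem j h1 h2) with heq | hrel
      · have : I j = 1 := congrArg Prod.fst heq; omega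
      · exact hrel.1
    have hIm : ∀ j, 1 ≤ j → j ≤ m' → I j ≤ m := by
      intro j h1 h2
      rcases rel_last hpw hTlast (hmem j h1 h2) with heq | hrel
      · have : I j = m := congrArg Prod.fst heq; omega
      · exact hrel.1
    have hIcost : ∀ j, 1 ≤ j → j ≤ m' → |x (I j) - y j| ≤ r + ε := fun j h1 h2 =>
      le_trans (abs_le_travCost (hmem j h1 h2)) hTcost
    have hImono : ∀ j j', 1 ≤ j → j ≤ j' → j' ≤ m' → I j ≤ I j' := by
      intro j j' h1 h2 h3
      obtain ⟨p, hp, hpj, hpq⟩ := exists_match T hTchain (1, 1) hThead (I j', j')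
        (hmem j' (by omega) h3) j h1 h2
      have hle : I j ≤ p.1 := Nat.sInf_le (by rw [Set.mem_setOf_eq, ← hpj]; simpa using hp)
      simp only at hpq
      omega
    set jof : Fin m → ℕ := fun jf => min (jf.val + 1) m' with hjof
    have hjof1 : ∀ jf : Fin m, 1 ≤ jof jf := fun jf => by simp only [hjof]; omega
    have hjof2 : ∀ jf : Fin m, jof jf ≤ m' := fun jf => by simp only [hjof]; omega
    set f : Fin m → Fin m := fun jf => ⟨I (jof jf) - 1, by
      have h1 := hIm (jof jf) (hjof1 jf) (hjof2 jf); omega⟩ with hf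
    set sg : Fin m → Bool := fun jf => decide (x (I (jof jf)) ≤ y (jof jf)) with hsg
    have hfmono : Monotone f := by
      intro a b hab
      have hab' : (a : ℕ) ≤ b := hab
      show (f a).val ≤ (f b).val
      simp only [hf]
      have h1 : jof a ≤ jof b := by simp only [hjof]; omega
      have h2 := hImono (jof a) (jof b) (hjof1 a) h1 (hjof2 b)
      omega
    have hfsE : (f, sg) ∈ E := by
      simp only [hE, Finset.mem_product, Finset.mem_filter, Finset.mem_univ, true_and,
        and_true]
      exact hfmono
    have hcD : bld (f, sg) ∈ E.image bld := Finset.mem_image_of_mem _ hfsE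
    set T1 := (List.range m).map (fun i => (min (i + 1) m', min (i + 1) m)) with hT1
    have hT1trav : IsTraversal m' m T1 :=
      diag_traversal m m' m hm hm'1 hm hm'2 (le_refl m) (Or.inr rfl)
    have hcost1 : travCost y (bld (f, sg)) T1 ≤ r / 2 + ε := by
      apply foldr_max_le (by positivity)
      intro a ha
      simp only [hT1, List.map_map, List.mem_map, List.mem_range, Function.comp] at ha
      obtain ⟨i, hi, rfl⟩ := ha
      obtain ⟨j, hj⟩ : ∃ j, (i + 1) ⊓ m' = j := ⟨_, rfl⟩
      have hj1 : 1 ≤ j := by omega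
      have hj2 : j ≤ m' := by omega
      have hIj1 := hI1 j hj1 hj2
      have habs := hIcost j hj1 hj2
      have h1 : clamp (min (i + 1) m) = (⟨i, hi⟩ : Fin m) := by
        apply Fin.ext
        simp only [hclamp]
        omega
      have hcval : bld (f, sg) (min (i + 1) m) =
          x (I j) + (if x (I j) ≤ y j then r / 2 else -(r / 2)) := by
        rw [hbld]
        simp only [h1, hf, hsg, hjof]
        simp only [hj]
        have h2 : I j - 1 + 1 = I j := by omega
        rw [h2]
        by_cases hcase : x (I j) ≤ y j
        · rw [if_pos hcase, if_pos (decide_eq_true hcase)]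
        · rw [if_neg hcase,
            if_neg (show ¬decide (x (I j) ≤ y j) = true from
              fun hdec => hcase (of_decide_eq_true hdec))]
      simp only [hj]
      rw [hcval]
      rcases abs_le.mp habs with ⟨hl, hu⟩
      by_cases hcase : x (I j) ≤ y j
      · rw [if_pos hcase, abs_le]; constructor <;> linarith
      · rw [if_neg hcase, abs_le]; push_neg at hcase; constructor <;> linarith
    have hdF : dF m' m y (bld (f, sg)) ≤ r / 2 + ε := by
      refine le_trans (csInf_le ?_ ?_) hcost1
      · exact ⟨0, fun v hv => by obtain ⟨T', _, rfl⟩ := hv; exact travCost_nonneg _ _ _⟩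
      · exact ⟨T1, hT1trav, rfl⟩
    have hge := hc0min (bld (f, sg)) hcD
    have : dF m' m y c0 ≤ r / 2 + ε := le_trans hge hdF
    simp only [hδ, hε] at this hδpos
    linarith
end
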